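/- For all p,q≥0, the rational functions R_k satisfy the identity 1 − x²·R_p(x²)·R_q(x²) = U_{p+q}(1/(2x)) / (U_p(1/(2x))·U_q(1/(2x))), where U_m denotes the Chebyshev polynomials of the second kind. -/

import Mathlib

/-- Chebyshev polynomials of the second kind, as real-valued functions. -/
def chebU : ℕ → ℝ → ℝ
  | 0, _ => 1
  | 1, t => 2 * t
  | (r + 2), t => 2 * t * chebU (r + 1) t - chebU r t

/-- The rational functions `R_k`: `R_0(x) = 0`, `R_k(x) = 1/(1 - x·R_{k-1}(x))`. -/
noncomputable def Rfun : ℕ → ℝ → ℝ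
  | 0, _ => 0
  | (k + 1), x => 1 / (1 - x * Rfun k x)

/-- `U_{k-1}`, with `U_{-1} = 0`. -/
def chebUpred : ℕ → ℝ → ℝ
  | 0, _ => 0
  | (n + 1), t => chebU n t

lemma chebU_succ (n : ℕ) (t : ℝ) :
    chebU (n + 1) t = 2 * t * chebU n t - chebUpred n t := by
  cases n with
  | zero => simp [chebU, chebUpred]
  | succ m => simp [chebU, chebUpred]

lemma chebU_add (t : ℝ) : ∀ q p : ℕ,
    chebU (p + q) t = chebU p t * chebU q t - chebUpred p t * chebUpred q t := by
  intro q
  induction q using Nat.strong_induction_on with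
  | _ q ih =>
    match q with
    | 0 => intro p; simp [chebU, chebUpred]
    | 1 =>
      intro p
      have h := chebU_succ p t
      simp only [chebU, chebUpred] at *
      ring_nf
      ring_nf at h
      linarith
    | (r + 2) =>
      intro p
      have h1 := ih (r + 1) (by omega) p
      have h0 := ih r (by omega) p
      have e : p + (r + 2) = (p + r) + 2 := by omega
      rw [e, chebU]
      have e1 : p + r + 1 = p + (r + 1) := by omega
      rw [e1, h1, h0]
      have u2 : chebU (r + 2) t = 2 * t * chebU (r + 1) t - chebU r t := rfl
      have up2 : chebUpred (r + 2) t = chebU (r + 1) t := rfl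
      have up1 : chebUpred (r + 1) t = chebU r t := rfl
      have us : chebU (r + 1) t = 2 * t * chebU r t - chebUpred r t := chebU_succ r t
      rw [u2, up2, up1, us]
      ring

lemma key (x : ℝ) (hx : x ≠ 0) :
    ∀ k, (∀ m, m < k → 1 - x ^ 2 * Rfun m (x ^ 2) ≠ 0) →
      chebU k (1 / (2 * x)) ≠ 0 ∧
      x * Rfun k (x ^ 2) * chebU k (1 / (2 * x)) = chebUpred k (1 / (2 * x)) := by
  intro k
  induction k with
  | zero => intro _; simp [chebU, chebUpred, Rfun]
  | succ k ih =>
    intro h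
    obtain ⟨hA, hR⟩ := ih (fun m hm => h m (by omega))
    have hd : 1 - x ^ 2 * Rfun k (x ^ 2) ≠ 0 := h k (by omega)
    have hsucc : chebU (k + 1) (1 / (2 * x)) =
        chebU k (1 / (2 * x)) * (1 - x ^ 2 * Rfun k (x ^ 2)) / x := by
      rw [chebU_succ, ← hR]
      field_simp
    constructor
    · rw [hsucc]
      exact div_ne_zero (mul_ne_zero hA hd) hx
    · have hRs : Rfun (k + 1) (x ^ 2) = 1 / (1 - x ^ 2 * Rfun k (x ^ 2)) := rfl
      rw [hsucc, hRs, chebUpred]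
      field_simp

theorem one_sub_sq_mul_R_mul_R (p q : ℕ) (x : ℝ) (hx : x ≠ 0)
    (hp : ∀ m, m < p → 1 - x ^ 2 * Rfun m (x ^ 2) ≠ 0)
    (hq : ∀ m, m < q → 1 - x ^ 2 * Rfun m (x ^ 2) ≠ 0)
    (hUp : chebU p (1 / (2 * x)) ≠ 0) (hUq : chebU q (1 / (2 * x)) ≠ 0) :
    1 - x ^ 2 * Rfun p (x ^ 2) * Rfun q (x ^ 2) =
      chebU (p + q) (1 / (2 * x)) / (chebU p (1 / (2 * x)) * chebU q (1 / (2 * x))) := by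
  obtain ⟨_, hRp⟩ := key x hx p hp
  obtain ⟨_, hRq⟩ := key x hx q hq
  rw [chebU_add (1 / (2 * x)) q p]
  rw [eq_div_iff (mul_ne_zero hUp hUq)]
  have : x ^ 2 * Rfun p (x ^ 2) * Rfun q (x ^ 2) *
      (chebU p (1 / (2 * x)) * chebU q (1 / (2 * x))) =
      chebUpred p (1 / (2 * x)) * chebUpred q (1 / (2 * x)) := by
    rw [← hRp, ← hRq]; ring
  linarith [this]
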